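/- Over the alphabet A with A_s = {a,b} and A_e = {c,d}, the sentence φ_4 = ∀x.((∃^{=2} y.(x∼y ∧ a(y))) ↔ (∃^{=2} y.(x∼y ∧ d(y)))) satisfies Win(φ_4) = ℕ × {0} × ℕ: a triple (k_s,k_e,k_se) admits a process triple P with |P_θ| = k_θ and a P-winning P-strategy for φ_4 if and only if k_e = 0. -/

import Mathlib

namespace PSyn

/-! ### Basic objects: types, alphabets, processes, events, executions -/

/-- The three process types: system, environment, mixed. -/
inductive PType where
  | s | e | se
deriving DecidableEq

/-- A finite alphabet: letters are the naturals `0, …, n-1`;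
`sys a = true` means `a` is a system action (`a ∈ A_s`), otherwise `a ∈ A_e`. -/
structure Alphabet where
  n : ℕ
  sys : ℕ → Bool

/-- An event is a pair (letter, process identity). -/
abbrev Event := ℕ × ℕ

/-- A process triple `P = (P_s, P_e, P_se)`: pairwise disjoint finite sets of processes. -/
structure ProcTriple where
  Ps : Finset ℕ
  Pe : Finset ℕ
  Pse : Finset ℕ
  disj_se : Disjoint Ps Pe
  disj_sse : Disjoint Ps Pse
  disj_ese : Disjoint Pe Pse

def ProcTriple.ofType (P : ProcTriple) : PType → Finset ℕ
  | .s => P.Ps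
  | .e => P.Pe
  | .se => P.Pse

def ProcTriple.all (P : ProcTriple) : Finset ℕ := P.Ps ∪ P.Pe ∪ P.Pse

/-- `σ ∈ Σ_s = A_s × (P_s ∪ P_se)`. -/
def isSysEvent (Alph : Alphabet) (P : ProcTriple) (σ : Event) : Prop :=
  σ.1 < Alph.n ∧ Alph.sys σ.1 = true ∧ (σ.2 ∈ P.Ps ∨ σ.2 ∈ P.Pse)

/-- `σ ∈ Σ_e = A_e × (P_e ∪ P_se)`. -/
def isEnvEvent (Alph : Alphabet) (P : ProcTriple) (σ : Event) : Prop :=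
  σ.1 < Alph.n ∧ Alph.sys σ.1 = false ∧ (σ.2 ∈ P.Pe ∨ σ.2 ∈ P.Pse)

def isEvent (Alph : Alphabet) (P : ProcTriple) (σ : Event) : Prop :=
  isSysEvent Alph P σ ∨ isEnvEvent Alph P σ

/-- A finite or infinite word over events. -/
inductive Exec where
  | fin : List Event → Exec
  | inf : (ℕ → Event) → Exec

/-- A `P`-execution: every event is an event of `P` over the alphabet. -/
def Exec.valid (Alph : Alphabet) (P : ProcTriple) : Exec → Prop
  | .fin l => ∀ σ ∈ l, isEvent Alph P σ
  | .inf g => ∀ i, isEvent Alph P (g i)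

def Exec.at? : Exec → ℕ → Option Event
  | .fin l, i => l[i]?
  | .inf g, i => some (g i)

/-- The set of positions of an execution. -/
def Exec.posDom : Exec → ℕ → Prop
  | .fin l, i => i < l.length
  | .inf _, _ => True

/-- Elements of the structure associated with `(P, w)`:
`inl p` is a process, `inr i` is a position. -/
abbrev Elem := ℕ ⊕ ℕ

/-- The universe `P ⊎ Pos(w)`. -/
def elemDom (P : ProcTriple) (w : Exec) : Elem → Prop
  | .inl p => p ∈ P.all
  | .inr i => w.posDom i

/-- The process an element belongs to (a process belongs to itself; a position
to the process executing it).  Two elements are `∼`-equivalent iff they have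
the same process. -/
def procOf (w : Exec) : Elem → Option ℕ
  | .inl p => some p
  | .inr i => (w.at? i).map Prod.snd

def letterOf (w : Exec) : Elem → Option ℕ
  | .inl _ => none
  | .inr i => (w.at? i).map Prod.fst

/-! ### First-order logic FO_A[∼,<,+1] -/

/-- Syntax of `FO_A[∼,<,+1]`; variables are naturals, letters are naturals. -/
inductive FO where
  | ptype : PType → ℕ → FO
  | letter : ℕ → ℕ → FO
  | eq : ℕ → ℕ → FO
  | sim : ℕ → ℕ → FO
  | lt : ℕ → ℕ → FO
  | succ : ℕ → ℕ → FO
  | not : FO → FO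
  | or : FO → FO → FO
  | ex : ℕ → FO → FO

/-- Satisfaction of a formula in the structure `S_(P,w)` under a valuation. -/
def Sat (P : ProcTriple) (w : Exec) : (ℕ → Elem) → FO → Prop
  | v, .ptype θ x => ∃ p, v x = Sum.inl p ∧ p ∈ P.ofType θ
  | v, .letter a x => letterOf w (v x) = some a
  | v, .eq x y => v x = v y
  | v, .sim x y => (procOf w (v x)).isSome ∧ procOf w (v x) = procOf w (v y)
  | v, .lt x y => ∃ i j, v x = Sum.inr i ∧ v y = Sum.inr j ∧ i < j ∧ w.posDom j
  | v, .succ x y => ∃ i, v x = Sum.inr i ∧ v y = Sum.inr (i + 1) ∧ w.posDom (i + 1)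
  | v, .not φ => ¬ Sat P w v φ
  | v, .or φ ψ => Sat P w v φ ∨ Sat P w v ψ
  | v, .ex x φ => ∃ u : Elem, elemDom P w u ∧ Sat P w (Function.update v x u) φ

/-- Satisfaction for sentences: `(P,w) ⊨ φ` (the valuation is irrelevant for sentences). -/
def SatS (P : ProcTriple) (w : Exec) (φ : FO) : Prop :=
  Sat P w (fun _ => Sum.inl 0) φ

def FO.free : FO → Finset ℕ
  | .ptype _ x => {x}
  | .letter _ x => {x}
  | .eq x y => {x, y}
  | .sim x y => {x, y}
  | .lt x y => {x, y}
  | .succ x y => {x, y}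
  | .not φ => φ.free
  | .or φ ψ => φ.free ∪ ψ.free
  | .ex x φ => φ.free.erase x

/-- A sentence has no free variables. -/
def FO.isSentence (φ : FO) : Prop := φ.free = ∅

def FO.vars : FO → Finset ℕ
  | .ptype _ x => {x}
  | .letter _ x => {x}
  | .eq x y => {x, y}
  | .sim x y => {x, y}
  | .lt x y => {x, y}
  | .succ x y => {x, y}
  | .not φ => φ.vars
  | .or φ ψ => φ.vars ∪ ψ.vars
  | .ex x φ => insert x φ.vars

/-- The two-variable fragment: only the variable names `0` and `1` are used. -/
def FO.twoVar (φ : FO) : Prop := φ.vars ⊆ ({0, 1} : Finset ℕ)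

/-- The fragment `FO_A[∼]`: neither `<` nor `+1` occurs. -/
def FO.onlySim : FO → Prop
  | .lt _ _ => False
  | .succ _ _ => False
  | .not φ => φ.onlySim
  | .or φ ψ => φ.onlySim ∧ ψ.onlySim
  | .ex _ φ => φ.onlySim
  | _ => True

/-! ### The asynchronous synthesis game and `Win(φ)` -/

/-- A `P`-strategy for System: `none` plays ε, `some σ` proposes the system event `σ`. -/
abbrev Strategy := List Event → Option Event

/-- The strategy only proposes system events (its codomain is `Σ_s ∪ {ε}`). -/
def properStrategy (Alph : Alphabet) (P : ProcTriple) (f : Strategy) : Prop :=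
  ∀ u σ, f u = some σ → isSysEvent Alph P σ

/-- The prefix of length `i` of an execution. -/
def Exec.pre : Exec → ℕ → List Event
  | .fin l, i => l.take i
  | .inf g, i => (List.range i).map g

/-- `w` is `f`-compatible: every system event of `w` is the one proposed by `f`. -/
def compatible (Alph : Alphabet) (P : ProcTriple) (f : Strategy) (w : Exec) : Prop :=
  ∀ i σ, w.at? i = some σ → isSysEvent Alph P σ → f (w.pre i) = some σ

/-- `w` is `f`-fair. -/
def fair (Alph : Alphabet) (P : ProcTriple) (f : Strategy) : Exec → Prop
  | .fin l => f l = none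
  | .inf g =>
      {i : ℕ | f (Exec.pre (Exec.inf g) i) ≠ none}.Infinite →
      {j : ℕ | isSysEvent Alph P (g j)}.Infinite

/-- `f` is `P`-winning for `φ`. -/
def winningStrategy (Alph : Alphabet) (P : ProcTriple) (φ : FO) (f : Strategy) : Prop :=
  properStrategy Alph P f ∧
  ∀ w : Exec, w.valid Alph P → compatible Alph P f w → fair Alph P f w → SatS P w φ

/-- Triples of naturals, indexed by the process types (s, e, se). -/
abbrev Tok := ℕ × ℕ × ℕ

/-- `Win(φ)`: the set of triples `(k_s, k_e, k_se)` admitting a winning System strategy. -/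
def WinFO (Alph : Alphabet) (φ : FO) : Set Tok :=
  { k | ∃ P : ProcTriple,
      P.Ps.card = k.1 ∧ P.Pe.card = k.2.1 ∧ P.Pse.card = k.2.2 ∧
      ∃ f : Strategy, winningStrategy Alph P φ f }

/-! ### Parameterized vector games -/

/-- Locations: `L = {0,…,B}^A`. -/
abbrev Loc (n B : ℕ) := Fin n → Fin (B + 1)

/-- A local acceptance condition: for each process type a pair `(⋈, n)`,
where the Boolean `true` stands for `=` and `false` for `≥`. -/
abbrev LCond := (Bool × ℕ) × (Bool × ℕ) × (Bool × ℕ)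

/-- Configurations: `C : L → ℕ^T`. -/
abbrev GConfig (n B : ℕ) := Loc n B → Tok

/-- Transitions: maps `L × L → ℕ^T`. -/
abbrev GTrans (n B : ℕ) := Loc n B → Loc n B → Tok

/-- A parameterized vector game `G = (A, B, F)`. -/
structure PVG where
  Alph : Alphabet
  B : ℕ
  F : List (Loc Alph.n B → LCond)

def cmpHolds (c : Bool × ℕ) (m : ℕ) : Prop := if c.1 then m = c.2 else c.2 ≤ m

def lcondHolds (κ : LCond) (t : Tok) : Prop :=
  cmpHolds κ.1 t.1 ∧ cmpHolds κ.2.1 t.2.1 ∧ cmpHolds κ.2.2 t.2.2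

/-- `C ⊨ F`. -/
def accept (G : PVG) (C : GConfig G.Alph.n G.B) : Prop :=
  ∃ κ ∈ G.F, ∀ ℓ, lcondHolds (κ ℓ) (C ℓ)

/-- `ℓ + a`: increase coordinate `a` by one, capped at `B`. -/
def locAdd {n B : ℕ} (ℓ : Loc n B) (a : ℕ) : Loc n B :=
  fun i =>
    if (i : ℕ) = a then ⟨min ((ℓ i : ℕ) + 1) B, Nat.lt_succ_of_le (min_le_right _ _)⟩
    else ℓ i

/-- `ℓ + w` for a finite word `w` over the alphabet. -/
def locAddW {n B : ℕ} (ℓ : Loc n B) : List ℕ → Loc n B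
  | [] => ℓ
  | a :: u => locAddW (locAdd ℓ a) u

def isSysWord (Alph : Alphabet) (u : List ℕ) : Prop :=
  ∀ a ∈ u, a < Alph.n ∧ Alph.sys a = true

def isEnvWord (Alph : Alphabet) (u : List ℕ) : Prop :=
  ∀ a ∈ u, a < Alph.n ∧ Alph.sys a = false

/-- System transitions: values in `ℕ × {0} × ℕ` and moves along system words. -/
def isSysTrans (G : PVG) (τ : GTrans G.Alph.n G.B) : Prop :=
  ∀ ℓ ℓ', (τ ℓ ℓ').2.1 = 0 ∧
    (τ ℓ ℓ' ≠ ((0, 0, 0) : Tok) → ∃ u : List ℕ, isSysWord G.Alph u ∧ ℓ' = locAddW ℓ u)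

/-- Environment transitions: values in `{0} × ℕ × ℕ` and moves along environment words. -/
def isEnvTrans (G : PVG) (τ : GTrans G.Alph.n G.B) : Prop :=
  ∀ ℓ ℓ', (τ ℓ ℓ').1 = 0 ∧
    (τ ℓ ℓ' ≠ ((0, 0, 0) : Tok) → ∃ u : List ℕ, isEnvWord G.Alph u ∧ ℓ' = locAddW ℓ u)

def outm {n B : ℕ} (τ : GTrans n B) (ℓ : Loc n B) : Tok := ∑ ℓ' : Loc n B, τ ℓ ℓ'

def inm {n B : ℕ} (τ : GTrans n B) (ℓ : Loc n B) : Tok := ∑ ℓ' : Loc n B, τ ℓ' ℓ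

/-- Componentwise order on `ℕ^T`. -/
def tokLe (s t : Tok) : Prop := s.1 ≤ t.1 ∧ s.2.1 ≤ t.2.1 ∧ s.2.2 ≤ t.2.2

def applicable {n B : ℕ} (τ : GTrans n B) (C : GConfig n B) : Prop :=
  ∀ ℓ, tokLe (outm τ ℓ) (C ℓ)

/-- `τ(C)(ℓ) = C(ℓ) − out_τ(ℓ) + in_τ(ℓ)` (componentwise). -/
def applyT {n B : ℕ} (τ : GTrans n B) (C : GConfig n B) : GConfig n B :=
  fun ℓ => C ℓ - outm τ ℓ + inm τ ℓ

/-- The configuration reached from `C0` after applying the transitions `ts` in order. -/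
def confAt {n B : ℕ} (C0 : GConfig n B) (ts : List (GTrans n B)) : GConfig n B :=
  ts.foldl (fun C τ => applyT τ C) C0

/-- A valid `C0`-play, represented by its list of transitions
(step `i`, 0-based, is System's if `i` is even, Environment's if `i` is odd). -/
def validPlay (G : PVG) (C0 : GConfig G.Alph.n G.B)
    (ts : List (GTrans G.Alph.n G.B)) : Prop :=
  ∀ i (h : i < ts.length),
    applicable (ts.get ⟨i, h⟩) (confAt C0 (ts.take i)) ∧
    (i % 2 = 0 → isSysTrans G (ts.get ⟨i, h⟩) ∧ accept G (confAt C0 (ts.take (i + 1)))) ∧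
    (i % 2 = 1 → isEnvTrans G (ts.get ⟨i, h⟩) ∧ ¬ accept G (confAt C0 (ts.take (i + 1))))

/-- A strategy for System in the game: a partial map from plays to transitions. -/
abbrev GStrat (n B : ℕ) := List (GTrans n B) → Option (GTrans n B)

/-- `f(C)` is defined, and whenever `f(π) = τ` for a valid play π ending in `C_i`,
`τ` is a system transition, applicable at `C_i`, and `τ(C_i) ⊨ F`. -/
def properGStrat (G : PVG) (C0 : GConfig G.Alph.n G.B) (f : GStrat G.Alph.n G.B) : Prop :=
  (f []).isSome ∧
  ∀ ts τ, validPlay G C0 ts → f ts = some τ →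
    isSysTrans G τ ∧ applicable τ (confAt C0 ts) ∧ accept G (applyT τ (confAt C0 ts))

def gCompatible {n B : ℕ} (f : GStrat n B) (ts : List (GTrans n B)) : Prop :=
  ∀ i (h : i < ts.length), i % 2 = 0 → f (ts.take i) = some (ts.get ⟨i, h⟩)

def gMaximal (G : PVG) (C0 : GConfig G.Alph.n G.B) (f : GStrat G.Alph.n G.B)
    (ts : List (GTrans G.Alph.n G.B)) : Prop :=
  ¬ ∃ ts', ts <+: ts' ∧ ts ≠ ts' ∧ validPlay G C0 ts' ∧ gCompatible f ts'

def winningGStrat (G : PVG) (C0 : GConfig G.Alph.n G.B) (f : GStrat G.Alph.n G.B) : Prop :=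
  properGStrat G C0 f ∧
  ∀ ts, validPlay G C0 ts → gCompatible f ts → gMaximal G C0 f ts →
    accept G (confAt C0 ts)

/-- A configuration is winning for System if System has a winning strategy from it. -/
def winningConf (G : PVG) (C0 : GConfig G.Alph.n G.B) : Prop :=
  ∃ f, winningGStrat G C0 f

/-- The all-zero location `ℓ_0`. -/
def loc0 (n B : ℕ) : Loc n B := fun _ => 0

/-- `C_k⃗`: all `k⃗` tokens on `ℓ_0`. -/
def initConfig {n B : ℕ} (k : Tok) : GConfig n B :=
  Function.update (fun _ => ((0, 0, 0) : Tok)) (loc0 n B) k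

/-- `Win(G)`. -/
def WinG (G : PVG) : Set Tok :=
  { k | winningConf G (initConfig k) }

/-! ### Environment chains and constants of a game -/

/-- `C <_e C'`. -/
def envStep (G : PVG) (C C' : GConfig G.Alph.n G.B) : Prop :=
  C ≠ C' ∧ ∃ τ, isEnvTrans G τ ∧ applicable τ C ∧ C' = applyT τ C

/-- There is a chain `C = C_0 <_e C_1 <_e … <_e C_d`. -/
def hasChain (G : PVG) (C : GConfig G.Alph.n G.B) (d : ℕ) : Prop :=
  ∃ cs : ℕ → GConfig G.Alph.n G.B, cs 0 = C ∧ ∀ i < d, envStep G (cs i) (cs (i + 1))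

/-- `C ∈ Conf_d`: the longest `<_e`-chain starting in `C` has length exactly `d`. -/
def ConfD (G : PVG) (C : GConfig G.Alph.n G.B) (d : ℕ) : Prop :=
  hasChain G C d ∧ ¬ hasChain G C (d + 1)

def lcondMax (κ : LCond) : ℕ := max κ.1.2 (max κ.2.1.2 κ.2.2.2)

/-- `K`: the largest constant occurring in the acceptance condition `F`. -/
def maxConst (G : PVG) : ℕ :=
  (G.F.map fun κ => Finset.univ.sup fun ℓ : Loc G.Alph.n G.B => lcondMax (κ ℓ)).foldr max 0

/-- `|A_e|`: the number of environment letters. -/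
def envCard (Alph : Alphabet) : ℕ :=
  ((Finset.range Alph.n).filter fun a => Alph.sys a = false).card

/-- `|L| = (B+1)^|A|`. -/
def numLoc (G : PVG) : ℕ := (G.B + 1) ^ G.Alph.n

/-! ### Cutoffs -/

/-- `k⃗_0` is a cutoff of `W` with respect to `(N_s, N_e, N_se)`. -/
def IsCutoff (Ns Ne Nse : Set ℕ) (W : Set Tok) (k0 : Tok) : Prop :=
  k0.1 ∈ Ns ∧ k0.2.1 ∈ Ne ∧ k0.2.2 ∈ Nse ∧
  ((∀ k : Tok, k.1 ∈ Ns → k.2.1 ∈ Ne → k.2.2 ∈ Nse →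
      k0.1 ≤ k.1 → k0.2.1 ≤ k.2.1 → k0.2.2 ≤ k.2.2 → k ∈ W) ∨
   (∀ k : Tok, k.1 ∈ Ns → k.2.1 ∈ Ne → k.2.2 ∈ Nse →
      k0.1 ≤ k.1 → k0.2.1 ≤ k.2.1 → k0.2.2 ≤ k.2.2 → k ∉ W))

/-! ### Counting formulas and the normal form for FO[∼] -/

def FO.and (φ ψ : FO) : FO := FO.not (FO.or (FO.not φ) (FO.not ψ))

def FO.imp (φ ψ : FO) : FO := FO.or (FO.not φ) ψ

def FO.iff (φ ψ : FO) : FO := FO.and (φ.imp ψ) (ψ.imp φ)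

def FO.all (x : ℕ) (φ : FO) : FO := FO.not (FO.ex x (FO.not φ))

def trueFO : FO := FO.eq 0 0

def bigAnd (l : List FO) : FO := l.foldr FO.and trueFO

def bigOr (l : List FO) : FO := l.foldr FO.or (FO.not trueFO)

/-- `∃^{≥m} y. (mk y)`: there are at least `m` distinct witnesses; the witness
variables are `base, base+1, …, base+m-1`. -/
def exGe (m base : ℕ) (mk : ℕ → FO) : FO :=
  let distinct : List FO :=
    (List.range m).flatMap fun i =>
      ((List.range m).filter fun j => decide (i < j)).map fun j =>
        FO.not (FO.eq (base + i) (base + j))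
  let body : FO :=
    FO.and (bigAnd distinct) (bigAnd ((List.range m).map fun i => mk (base + i)))
  ((List.range m).map (base + ·)).foldr FO.ex body

/-- `∃^{=m} y. (mk y) := ∃^{≥m} y. (mk y) ∧ ¬ ∃^{≥m+1} y. (mk y)`. -/
def exEq (m base : ℕ) (mk : ℕ → FO) : FO :=
  FO.and (exGe m base mk) (FO.not (exGe (m + 1) base mk))

/-- `ψ_{B,ℓ}(y)`: in the class of `y`, each letter `a` occurs exactly `ℓ(a)` times
if `ℓ(a) < B`, and at least `ℓ(a)` times if `ℓ(a) = B`. -/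
def psiCount (n B : ℕ) (ℓ : ℕ → ℕ) (y : ℕ) : FO :=
  bigAnd ((List.range n).map fun a =>
    if ℓ a < B then
      exEq (ℓ a) (y + 1) (fun z => FO.and (FO.sim y z) (FO.letter a z))
    else
      exGe (ℓ a) (y + 1) (fun z => FO.and (FO.sim y z) (FO.letter a z)))

/-- `∃^{⋈m} y. (θ(y) ∧ ψ_{B,ℓ}(y))`, where `⋈` is `=` if `isEq` and `≥` otherwise. -/
def nfAtom (n B : ℕ) (isEq : Bool) (m : ℕ) (θ : PType) (ℓ : ℕ → ℕ) : FO :=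
  let mk : ℕ → FO := fun y => FO.and (FO.ptype θ y) (psiCount n B ℓ y)
  if isEq then exEq m 0 mk else exGe m 0 mk

/-! ### The normalized synthesis problem -/

/-- A normalized strategy: maps finite executions to finite system words. -/
abbrev NormStrategy := List Event → Option (List Event)

/-- A normalized `P`-execution, given by its block decomposition `bs`
(`bs[j]` with `j` even is a System block, `j` odd an Environment block;
this corresponds to the 1-based indexing `w = w_1 … w_n` of the paper). -/
def NormExec (Alph : Alphabet) (P : ProcTriple) (φ : FO) (bs : List (List Event)) : Prop :=
  1 ≤ bs.length ∧
  ∀ j (h : j < bs.length),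
    (j % 2 = 0 → (∀ σ ∈ bs.get ⟨j, h⟩, isSysEvent Alph P σ) ∧
        SatS P (Exec.fin ((bs.take (j + 1)).flatten)) φ) ∧
    (j % 2 = 1 → (∀ σ ∈ bs.get ⟨j, h⟩, isEnvEvent Alph P σ) ∧
        ¬ SatS P (Exec.fin ((bs.take (j + 1)).flatten)) φ)

/-- Properness of a normalized strategy: `f(ε)` is defined, outputs are system
words, and `(P, w · f(w)) ⊨ φ` whenever `f(w)` is defined. -/
def properNStrat (Alph : Alphabet) (P : ProcTriple) (φ : FO) (f : NormStrategy) : Prop :=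
  (f []).isSome ∧
  ∀ w u, f w = some u →
    (∀ σ ∈ u, isSysEvent Alph P σ) ∧ SatS P (Exec.fin (w ++ u)) φ

def nCompatible (f : NormStrategy) (bs : List (List Event)) : Prop :=
  ∀ j (h : j < bs.length), j % 2 = 0 → f ((bs.take j).flatten) = some (bs.get ⟨j, h⟩)

def nMaximal (Alph : Alphabet) (P : ProcTriple) (φ : FO) (f : NormStrategy)
    (bs : List (List Event)) : Prop :=
  ¬ ∃ bs', bs <+: bs' ∧ bs ≠ bs' ∧ NormExec Alph P φ bs' ∧ nCompatible f bs'

def winningNStrategy (Alph : Alphabet) (P : ProcTriple) (φ : FO) (f : NormStrategy) : Prop :=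
  properNStrat Alph P φ f ∧
  ∀ bs, NormExec Alph P φ bs → nCompatible f bs → nMaximal Alph P φ f bs →
    SatS P (Exec.fin bs.flatten) φ

/-- `NWin(φ)`. -/
def NWin (Alph : Alphabet) (φ : FO) : Set Tok :=
  { k | ∃ P : ProcTriple,
      P.Ps.card = k.1 ∧ P.Pe.card = k.2.1 ∧ P.Pse.card = k.2.2 ∧
      ∃ f : NormStrategy, winningNStrategy Alph P φ f }

/-! ### Concrete alphabet and formulas of the examples -/

/-- The alphabet with `A_s = {a, b} = {0, 1}` and `A_e = {c, d} = {2, 3}`. -/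
def alph4 : Alphabet := ⟨4, fun a => decide (a < 2)⟩

/-- `φ_1 = ∀x.((s(x) ∨ se(x)) → ∃y.(x∼y ∧ (a(y) ∨ b(y))))`. -/
def phi1 : FO :=
  FO.all 0 (FO.imp (FO.or (FO.ptype .s 0) (FO.ptype .se 0))
    (FO.ex 1 (FO.and (FO.sim 0 1) (FO.or (FO.letter 0 1) (FO.letter 1 1)))))

/-- `φ_4 = ∀x.((∃^{=2}y.(x∼y ∧ a(y))) ↔ (∃^{=2}y.(x∼y ∧ d(y))))`. -/
def phi4 : FO :=
  FO.all 0 (FO.iff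
    (exEq 2 1 fun y => FO.and (FO.sim 0 y) (FO.letter 0 y))
    (exEq 2 1 fun y => FO.and (FO.sim 0 y) (FO.letter 3 y)))

/-- Vectors `{0,…,3}^{4}` as functions `ℕ → ℕ`. -/
def vec4 (v0 v1 v2 v3 : ℕ) : ℕ → ℕ := fun i => [v0, v1, v2, v3].getD i 0

def allVecs4 : List (ℕ → ℕ) :=
  (List.range 4).flatMap fun v0 =>
    (List.range 4).flatMap fun v1 =>
      (List.range 4).flatMap fun v2 =>
        (List.range 4).map fun v3 => vec4 v0 v1 v2 v3

/-- `Z`: vectors with `ℓ(a) = 2 ≠ ℓ(d)` or `ℓ(d) = 2 ≠ ℓ(a)` (letters `a = 0`, `d = 3`). -/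
def Zvecs : List (ℕ → ℕ) :=
  allVecs4.filter fun ℓ => decide ((ℓ 0 = 2 ∧ ℓ 3 ≠ 2) ∨ (ℓ 3 = 2 ∧ ℓ 0 ≠ 2))

/-- `φ_4' = ⋀_{θ ∈ T, ℓ ∈ Z} ∃^{=0} y.(θ(y) ∧ ψ_{3,ℓ}(y))`. -/
def phi4' : FO :=
  bigAnd (([PType.s, PType.e, PType.se].flatMap fun θ =>
    Zvecs.map fun ℓ => nfAtom 4 3 true 0 θ ℓ))

/-! ### Effective encodings of inputs (for decidability statements) -/

def decodePType (k : ℕ) : PType :=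
  if k % 3 = 0 then .s else if k % 3 = 1 then .e else .se

/-- Surjective decoding of formulas from naturals (with fuel). -/
def decodeFOAux : ℕ → ℕ → FO
  | 0, _ => FO.eq 0 0
  | fuel + 1, c =>
    let t := c % 9
    let m := c / 9
    let a := m.unpair.1
    let b := m.unpair.2
    if t = 0 then FO.ptype (decodePType a) b
    else if t = 1 then FO.letter a b
    else if t = 2 then FO.eq a b
    else if t = 3 then FO.sim a b
    else if t = 4 then FO.lt a b
    else if t = 5 then FO.succ a b
    else if t = 6 then FO.not (decodeFOAux fuel m)
    else if t = 7 then FO.or (decodeFOAux fuel a) (decodeFOAux fuel b)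
    else FO.ex a (decodeFOAux fuel b)

def decodeFO (c : ℕ) : FO := decodeFOAux c c

/-- Decoding an input of the synthesis/satisfiability problems: an alphabet
(size and partition) together with a formula. -/
def decodeFOInput (c : ℕ) : Alphabet × FO :=
  (⟨c.unpair.1.unpair.1, fun a => (c.unpair.1.unpair.2).testBit a⟩, decodeFO c.unpair.2)

def decodeBN (m : ℕ) : Bool × ℕ := (decide (m % 2 = 0), m / 2)

def decodeLCond (m : ℕ) : LCond :=
  (decodeBN m.unpair.1, decodeBN m.unpair.2.unpair.1, decodeBN m.unpair.2.unpair.2)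

/-- An explicit index of a location, used to decode local acceptance conditions. -/
def locIndex {n B : ℕ} (ℓ : Loc n B) : ℕ := ∑ i : Fin n, (ℓ i : ℕ) * (B + 1) ^ (i : ℕ)

/-- Decoding a parameterized vector game from a natural number. -/
def decodeGame (c : ℕ) : PVG :=
  let n := c.unpair.1.unpair.1
  let sy := c.unpair.1.unpair.2
  let B := c.unpair.2.unpair.1
  let Fc := c.unpair.2.unpair.2
  { Alph := ⟨n, fun a => sy.testBit a⟩
    B := B
    F := (Denumerable.ofNat (List ℕ) Fc).map fun kc =>
      fun ℓ => decodeLCond ((Denumerable.ofNat (List ℕ) kc).getD (locIndex ℓ) 0) }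



/-! ### Auxiliary development for `win_phi4` -/

section Aux

/-- Number of positions of `l` carrying the event `v`. -/
def cnt (l : List Event) (v : Event) : ℕ :=
  ((Finset.range l.length).filter fun i => l[i]? = some v).card

lemma lt_length_of_getElem? {l : List Event} {i : ℕ} {v : Event} (h : l[i]? = some v) :
    i < l.length := by
  by_contra hc
  rw [List.getElem?_eq_none (by omega)] at h
  exact absurd h (by simp)

lemma mem_cntset {l : List Event} {v : Event} {i : ℕ} :
    (i ∈ (Finset.range l.length).filter fun i => l[i]? = some v) ↔ l[i]? = some v := by
  simp only [Finset.mem_filter, Finset.mem_range]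
  exact ⟨fun h => h.2, fun h => ⟨lt_length_of_getElem? h, h⟩⟩

lemma two_le_cnt_iff {l : List Event} {v : Event} :
    2 ≤ cnt l v ↔ ∃ i j : ℕ, i ≠ j ∧ l[i]? = some v ∧ l[j]? = some v := by
  unfold cnt
  rw [show (2 ≤ _ ↔ 1 < _) from Iff.rfl, Finset.one_lt_card]
  constructor
  · rintro ⟨i, hi, j, hj, hij⟩
    exact ⟨i, j, hij, mem_cntset.mp hi, mem_cntset.mp hj⟩
  · rintro ⟨i, j, hij, hi, hj⟩
    exact ⟨i, mem_cntset.mpr hi, j, mem_cntset.mpr hj, hij⟩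

lemma three_le_cnt_iff {l : List Event} {v : Event} :
    3 ≤ cnt l v ↔ ∃ i j k : ℕ, i ≠ j ∧ i ≠ k ∧ j ≠ k ∧
      l[i]? = some v ∧ l[j]? = some v ∧ l[k]? = some v := by
  unfold cnt
  rw [show (3 ≤ _ ↔ 2 < _) from Iff.rfl, Finset.two_lt_card_iff]
  constructor
  · rintro ⟨i, j, k, hi, hj, hk, h1, h2, h3⟩
    exact ⟨i, j, k, h1, h2, h3, mem_cntset.mp hi, mem_cntset.mp hj, mem_cntset.mp hk⟩
  · rintro ⟨i, j, k, h1, h2, h3, hi, hj, hk⟩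
    exact ⟨i, j, k, mem_cntset.mpr hi, mem_cntset.mpr hj, mem_cntset.mpr hk, h1, h2, h3⟩

lemma cnt_append {l : List Event} {σ v : Event} :
    cnt (l ++ [σ]) v = cnt l v + if σ = v then 1 else 0 := by
  unfold cnt
  have hlen : (l ++ [σ]).length = l.length + 1 := by simp
  rw [hlen, Finset.range_add_one, Finset.filter_insert]
  have hlast : (l ++ [σ])[l.length]? = some σ := by
    rw [List.getElem?_append_right le_rfl]; simp
  have hfilter : (Finset.range l.length).filter (fun i => (l ++ [σ])[i]? = some v) =
      (Finset.range l.length).filter (fun i => l[i]? = some v) := by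
    apply Finset.filter_congr
    intro i hi
    rw [List.getElem?_append]
    simp [Finset.mem_range.mp hi]
  by_cases h : σ = v
  · rw [if_pos (by rw [hlast, h]),
      Finset.card_insert_of_notMem (by simp [Finset.mem_filter]), hfilter, if_pos h]
  · rw [if_neg (by rw [hlast]; simpa using h), hfilter, if_neg h, Nat.add_zero]

/-- The target number of `a`'s given the number of `d`'s. -/
def target (d : ℕ) : ℕ := if d < 2 then 0 else if d = 2 then 2 else 3

lemma target_mono {d d' : ℕ} (h : d ≤ d') : target d ≤ target d' := by
  unfold target; split_ifs <;> omega

lemma target_le {d : ℕ} : target d ≤ 3 := by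
  unfold target; split_ifs <;> omega

lemma target_eq_two {d : ℕ} : target d = 2 ↔ d = 2 := by
  unfold target; split_ifs <;> simp_all <;> omega

lemma target_of_ge {d : ℕ} (h : 3 ≤ d) : target d = 3 := by
  unfold target; split_ifs <;> omega

lemma pre_zero (w : Exec) : w.pre 0 = [] := by
  cases w <;> simp [Exec.pre]

lemma pre_succ (w : Exec) (n : ℕ) : w.pre (n + 1) = w.pre n ++ (w.at? n).toList := by
  cases w with
  | fin l => simpa [Exec.pre, Exec.at?] using List.take_succ
  | inf g => simp [Exec.pre, Exec.at?, List.range_succ]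

lemma at?_pre {w : Exec} {n i : ℕ} {v : Event} :
    (w.pre n)[i]? = some v ↔ i < n ∧ w.at? i = some v := by
  cases w with
  | fin l =>
    show (l.take n)[i]? = some v ↔ _
    rw [List.getElem?_take]
    by_cases h : i < n <;> simp [h, Exec.at?]
  | inf g =>
    show ((List.range n).map g)[i]? = some v ↔ _
    by_cases h : i < n
    · simp [List.getElem?_map, List.getElem?_range h, h, Exec.at?]
    · rw [List.getElem?_eq_none (by simpa using h)]
      simp [h]

lemma at?_posDom {w : Exec} {i : ℕ} {σ : Event} (h : w.at? i = some σ) : w.posDom i := by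
  cases w with
  | fin l => exact lt_length_of_getElem? h
  | inf g => trivial

lemma valid_at? {Alph : Alphabet} {P : ProcTriple} {w : Exec} (hv : w.valid Alph P)
    {i : ℕ} {σ : Event} (h : w.at? i = some σ) : isEvent Alph P σ := by
  cases w with
  | fin l =>
    exact hv σ (List.mem_of_getElem? h)
  | inf g =>
    have : σ = g i := by simpa [Exec.at?] using h.symm
    exact this ▸ hv i

/-- There are (at least) two distinct positions of `w` carrying the event `v`. -/
def Ge2 (w : Exec) (v : Event) : Prop :=
  ∃ i j, i ≠ j ∧ w.at? i = some v ∧ w.at? j = some v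

/-- There are (at least) three distinct positions of `w` carrying the event `v`. -/
def Ge3 (w : Exec) (v : Event) : Prop :=
  ∃ i j k, i ≠ j ∧ i ≠ k ∧ j ≠ k ∧
    w.at? i = some v ∧ w.at? j = some v ∧ w.at? k = some v

/-- There are exactly two positions of `w` carrying the event `v`. -/
def Ex2 (w : Exec) (v : Event) : Prop := Ge2 w v ∧ ¬ Ge3 w v

lemma ge2_iff_pre {w : Exec} {v : Event} : Ge2 w v ↔ ∃ N, 2 ≤ cnt (w.pre N) v := by
  constructor
  · rintro ⟨i, j, hij, hi, hj⟩
    refine ⟨max i j + 1, two_le_cnt_iff.mpr ⟨i, j, hij, ?_, ?_⟩⟩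
    · exact at?_pre.mpr ⟨by omega, hi⟩
    · exact at?_pre.mpr ⟨by omega, hj⟩
  · rintro ⟨N, hN⟩
    obtain ⟨i, j, hij, hi, hj⟩ := two_le_cnt_iff.mp hN
    exact ⟨i, j, hij, (at?_pre.mp hi).2, (at?_pre.mp hj).2⟩

lemma ge3_iff_pre {w : Exec} {v : Event} : Ge3 w v ↔ ∃ N, 3 ≤ cnt (w.pre N) v := by
  constructor
  · rintro ⟨i, j, k, h1, h2, h3, hi, hj, hk⟩
    refine ⟨max i (max j k) + 1, three_le_cnt_iff.mpr ⟨i, j, k, h1, h2, h3, ?_, ?_, ?_⟩⟩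
    · exact at?_pre.mpr ⟨by omega, hi⟩
    · exact at?_pre.mpr ⟨by omega, hj⟩
    · exact at?_pre.mpr ⟨by omega, hk⟩
  · rintro ⟨N, hN⟩
    obtain ⟨i, j, k, h1, h2, h3, hi, hj, hk⟩ := three_le_cnt_iff.mp hN
    exact ⟨i, j, k, h1, h2, h3, (at?_pre.mp hi).2, (at?_pre.mp hj).2, (at?_pre.mp hk).2⟩

lemma cnt_opt_append {l : List Event} {o : Option Event} {v : Event} :
    cnt (l ++ o.toList) v = cnt l v + if o = some v then 1 else 0 := by
  cases o with
  | none => simp [Option.toList]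
  | some σ =>
    rw [show (some σ).toList = [σ] from rfl, cnt_append]
    by_cases h : σ = v <;> simp [h]

lemma cnt_pre_mono {w : Exec} {v : Event} {N N' : ℕ} (h : N ≤ N') :
    cnt (w.pre N) v ≤ cnt (w.pre N') v := by
  induction N' with
  | zero =>
    have hN : N = 0 := by omega
    simp [hN]
  | succ n ih =>
    rcases Nat.lt_or_ge N (n + 1) with h' | h'
    · calc cnt (w.pre N) v ≤ cnt (w.pre n) v := ih (by omega)
        _ ≤ _ := by rw [pre_succ, cnt_opt_append]; omega
    · have : N = n + 1 := by omega
      simp [this]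

lemma pre_fin_full {l : List Event} {N : ℕ} (h : l.length ≤ N) :
    (Exec.fin l).pre N = l := by
  simp [Exec.pre, List.take_of_length_le h]

lemma ge2_fin {l : List Event} {v : Event} : Ge2 (.fin l) v ↔ 2 ≤ cnt l v := by
  rw [ge2_iff_pre]
  constructor
  · rintro ⟨N, hN⟩
    calc 2 ≤ cnt ((Exec.fin l).pre N) v := hN
      _ ≤ cnt ((Exec.fin l).pre (max N l.length)) v := cnt_pre_mono (le_max_left _ _)
      _ = cnt l v := by rw [pre_fin_full (le_max_right _ _)]
  · intro h
    exact ⟨l.length, by rwa [pre_fin_full le_rfl]⟩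

lemma ge3_fin {l : List Event} {v : Event} : Ge3 (.fin l) v ↔ 3 ≤ cnt l v := by
  rw [ge3_iff_pre]
  constructor
  · rintro ⟨N, hN⟩
    calc 3 ≤ cnt ((Exec.fin l).pre N) v := hN
      _ ≤ cnt ((Exec.fin l).pre (max N l.length)) v := cnt_pre_mono (le_max_left _ _)
      _ = cnt l v := by rw [pre_fin_full (le_max_right _ _)]
  · intro h
    exact ⟨l.length, by rwa [pre_fin_full le_rfl]⟩

lemma ex2_fin {l : List Event} {v : Event} : Ex2 (.fin l) v ↔ cnt l v = 2 := by
  rw [Ex2, ge2_fin, ge3_fin]; omega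

end Aux


section SatAux

variable {P : ProcTriple} {w : Exec}

lemma sat_and {v : ℕ → Elem} {φ ψ : FO} :
    Sat P w v (FO.and φ ψ) ↔ Sat P w v φ ∧ Sat P w v ψ := by
  simp [FO.and, Sat]

lemma sat_iff' {v : ℕ → Elem} {φ ψ : FO} :
    Sat P w v (FO.iff φ ψ) ↔ (Sat P w v φ ↔ Sat P w v ψ) := by
  simp [FO.iff, FO.imp, FO.and, Sat]; tauto

lemma sat_all {v : ℕ → Elem} {x : ℕ} {φ : FO} :
    Sat P w v (FO.all x φ) ↔ ∀ u, elemDom P w u → Sat P w (Function.update v x u) φ := by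
  simp [FO.all, Sat]

lemma dom_procOf {x : Elem} (h : elemDom P w x) : ∃ q, procOf w x = some q := by
  cases x with
  | inl p => exact ⟨p, rfl⟩
  | inr i =>
    cases w with
    | fin l =>
      have hi : i < l.length := h
      exact ⟨l[i].2, by simp [procOf, Exec.at?, List.getElem?_eq_getElem hi]⟩
    | inf g => exact ⟨(g i).2, rfl⟩

lemma witness_iff {x u : Elem} {q a : ℕ} (hq : procOf w x = some q) :
    (elemDom P w u ∧ ((procOf w x).isSome ∧ procOf w x = procOf w u) ∧ letterOf w u = some a)
      ↔ ∃ i, u = Sum.inr i ∧ w.at? i = some (a, q) := by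
  constructor
  · rintro ⟨hdom, ⟨-, hsim⟩, hlet⟩
    cases u with
    | inl p => simp [letterOf] at hlet
    | inr i =>
      refine ⟨i, rfl, ?_⟩
      rw [hq] at hsim
      cases hat : w.at? i with
      | none => simp [letterOf, hat] at hlet
      | some σ =>
        have h2 : σ.2 = q := by
          simp [procOf, hat] at hsim; omega
        have h1 : σ.1 = a := by
          simp [letterOf, hat] at hlet; omega
        rw [show σ = (a, q) from Prod.ext h1 h2]
  · rintro ⟨i, rfl, hat⟩
    refine ⟨at?_posDom hat, ⟨by rw [hq]; rfl, ?_⟩, ?_⟩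
    · rw [hq]; simp [procOf, hat]
    · simp [letterOf, hat]

lemma sat_exGe2 {v : ℕ → Elem} {a q : ℕ} (hq : procOf w (v 0) = some q) :
    Sat P w v (exGe 2 1 fun y => FO.and (FO.sim 0 y) (FO.letter a y)) ↔ Ge2 w (a, q) := by
  have hform : (exGe 2 1 fun y => FO.and (FO.sim 0 y) (FO.letter a y)) =
      FO.ex 1 (FO.ex 2 (FO.and (FO.and (FO.not (FO.eq 1 2)) trueFO)
        (FO.and (FO.and (FO.sim 0 1) (FO.letter a 1))
          (FO.and (FO.and (FO.sim 0 2) (FO.letter a 2)) trueFO)))) := rfl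
  rw [hform]
  simp only [Sat, FO.and, trueFO, Function.update_apply, not_or, not_not, and_true, true_and,
    show ((1:ℕ) = 2) = False by simp, show ((0:ℕ) = 2) = False by simp,
    show ((0:ℕ) = 1) = False by simp, if_false, if_true, eq_self_iff_true]
  constructor
  · rintro ⟨u, hdu, u', hdu', hne, hMu, hMu'⟩
    obtain ⟨i, rfl, hi⟩ := (witness_iff hq).mp ⟨hdu, hMu.1, hMu.2⟩
    obtain ⟨j, rfl, hj⟩ := (witness_iff hq).mp ⟨hdu', hMu'.1, hMu'.2⟩
    exact ⟨i, j, fun h => hne (by rw [h]), hi, hj⟩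
  · rintro ⟨i, j, hij, hi, hj⟩
    obtain ⟨hdi, hsi, hli⟩ := (witness_iff hq).mpr ⟨i, rfl, hi⟩
    obtain ⟨hdj, hsj, hlj⟩ := (witness_iff hq).mpr ⟨j, rfl, hj⟩
    exact ⟨.inr i, hdi, .inr j, hdj, by simpa using hij, ⟨hsi, hli⟩, ⟨hsj, hlj⟩⟩

lemma sat_exGe3 {v : ℕ → Elem} {a q : ℕ} (hq : procOf w (v 0) = some q) :
    Sat P w v (exGe 3 1 fun y => FO.and (FO.sim 0 y) (FO.letter a y)) ↔ Ge3 w (a, q) := by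
  have hform : (exGe 3 1 fun y => FO.and (FO.sim 0 y) (FO.letter a y)) =
      FO.ex 1 (FO.ex 2 (FO.ex 3 (FO.and
        (FO.and (FO.not (FO.eq 1 2)) (FO.and (FO.not (FO.eq 1 3))
          (FO.and (FO.not (FO.eq 2 3)) trueFO)))
        (FO.and (FO.and (FO.sim 0 1) (FO.letter a 1))
          (FO.and (FO.and (FO.sim 0 2) (FO.letter a 2))
            (FO.and (FO.and (FO.sim 0 3) (FO.letter a 3)) trueFO)))))) := rfl
  rw [hform]
  simp only [Sat, FO.and, trueFO, Function.update_apply, not_or, not_not, and_true, true_and,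
    show ((1:ℕ) = 2) = False by simp, show ((0:ℕ) = 2) = False by simp,
    show ((0:ℕ) = 1) = False by simp, show ((1:ℕ) = 3) = False by simp,
    show ((2:ℕ) = 3) = False by simp, show ((0:ℕ) = 3) = False by simp,
    if_false, if_true, eq_self_iff_true]
  constructor
  · rintro ⟨u, hdu, u', hdu', u'', hdu'', ⟨hne1, hne2, hne3⟩, hMu, hMu', hMu''⟩
    obtain ⟨i, rfl, hi⟩ := (witness_iff hq).mp ⟨hdu, hMu.1, hMu.2⟩
    obtain ⟨j, rfl, hj⟩ := (witness_iff hq).mp ⟨hdu', hMu'.1, hMu'.2⟩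
    obtain ⟨m, rfl, hm⟩ := (witness_iff hq).mp ⟨hdu'', hMu''.1, hMu''.2⟩
    exact ⟨i, j, m, fun h => hne1 (by rw [h]), fun h => hne2 (by rw [h]),
      fun h => hne3 (by rw [h]), hi, hj, hm⟩
  · rintro ⟨i, j, m, h1, h2, h3, hi, hj, hm⟩
    obtain ⟨hdi, hsi, hli⟩ := (witness_iff hq).mpr ⟨i, rfl, hi⟩
    obtain ⟨hdj, hsj, hlj⟩ := (witness_iff hq).mpr ⟨j, rfl, hj⟩
    obtain ⟨hdm, hsm, hlm⟩ := (witness_iff hq).mpr ⟨m, rfl, hm⟩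
    exact ⟨.inr i, hdi, .inr j, hdj, .inr m, hdm,
      ⟨by simpa using h1, by simpa using h2, by simpa using h3⟩,
      ⟨hsi, hli⟩, ⟨hsj, hlj⟩, ⟨hsm, hlm⟩⟩

lemma sat_not {v : ℕ → Elem} {φ : FO} : Sat P w v (FO.not φ) ↔ ¬ Sat P w v φ := Iff.rfl

lemma sat_exEq2 {v : ℕ → Elem} {a q : ℕ} (hq : procOf w (v 0) = some q) :
    Sat P w v (exEq 2 1 fun y => FO.and (FO.sim 0 y) (FO.letter a y)) ↔ Ex2 w (a, q) := by
  unfold exEq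
  rw [sat_and, sat_not, sat_exGe2 hq, sat_exGe3 hq, Ex2]

lemma proc_mem_all {Alph : Alphabet} (hv : w.valid Alph P) {x : Elem} {q : ℕ}
    (hx : elemDom P w x) (hq : procOf w x = some q) : q ∈ P.all := by
  cases x with
  | inl p =>
    have hpq : p = q := by simpa [procOf] using hq
    exact hpq ▸ hx
  | inr i =>
    cases hat : w.at? i with
    | none => simp [procOf, hat] at hq
    | some σ =>
      have hσq : σ.2 = q := by simpa [procOf, hat] using hq
      unfold ProcTriple.all
      rcases valid_at? hv hat with hs | he
      · rcases hs.2.2 with h | h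
        · exact Finset.mem_union_left _ (Finset.mem_union_left _ (hσq ▸ h))
        · exact Finset.mem_union_right _ (hσq ▸ h)
      · rcases he.2.2 with h | h
        · exact Finset.mem_union_left _ (Finset.mem_union_right _ (hσq ▸ h))
        · exact Finset.mem_union_right _ (hσq ▸ h)

lemma satS_phi4_iff :
    SatS P w phi4 ↔ ∀ x, elemDom P w x → ∀ q, procOf w x = some q →
      (Ex2 w ((0:ℕ), q) ↔ Ex2 w ((3:ℕ), q)) := by
  unfold SatS phi4
  rw [sat_all]
  constructor
  · intro h x hx q hq
    have hh := h x hx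
    rw [sat_iff'] at hh
    have h0 : procOf w ((Function.update (fun _ => Sum.inl 0 : ℕ → Elem) 0 x) 0) = some q := by
      simpa using hq
    rw [sat_exEq2 h0, sat_exEq2 h0] at hh
    exact hh
  · intro h u hu
    rw [sat_iff']
    obtain ⟨q, hq⟩ := dom_procOf hu
    have h0 : procOf w ((Function.update (fun _ => Sum.inl 0 : ℕ → Elem) 0 u) 0) = some q := by
      simpa using hq
    rw [sat_exEq2 h0, sat_exEq2 h0]
    exact h u hu q hq

end SatAux

section Game

/-- The extension sequence used to refute strategies when `P_e ≠ ∅`. -/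
def refExt (f : Strategy) (p : ℕ) : ℕ → List Event
  | 0 => []
  | n + 1 => refExt f p n ++
      [if n < 2 then ((3:ℕ), p) else (f (refExt f p n)).getD ((2:ℕ), p)]

def refSeq (f : Strategy) (p : ℕ) (n : ℕ) : Event :=
  if n < 2 then ((3:ℕ), p) else (f (refExt f p n)).getD ((2:ℕ), p)

lemma refExt_pre (f : Strategy) (p : ℕ) (n : ℕ) :
    Exec.pre (.inf (refSeq f p)) n = refExt f p n := by
  induction n with
  | zero => rw [pre_zero]; rfl
  | succ m ih =>
    rw [pre_succ, ih]
    rfl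

/-- The winning strategy when `P_e = ∅`. -/
noncomputable def stratF (P : ProcTriple) : Strategy := fun u =>
  ((P.all.filter fun q => cnt u ((0:ℕ), q) < target (cnt u ((3:ℕ), q))).toList.head?).map
    fun q => ((0 : ℕ), q)

lemma stratF_some {P : ProcTriple} {u : List Event} {σ : Event} (h : stratF P u = some σ) :
    σ.1 = 0 ∧ σ.2 ∈ P.all ∧ cnt u ((0:ℕ), σ.2) < target (cnt u ((3:ℕ), σ.2)) := by
  unfold stratF at h
  obtain ⟨q, hq, rfl⟩ := Option.map_eq_some_iff.mp h
  have hmem := Finset.mem_toList.mp (List.mem_of_mem_head? hq)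
  rw [Finset.mem_filter] at hmem
  exact ⟨rfl, hmem.1, hmem.2⟩

lemma stratF_none {P : ProcTriple} {u : List Event} (h : stratF P u = none) :
    ∀ q ∈ P.all, ¬ (cnt u ((0:ℕ), q) < target (cnt u ((3:ℕ), q))) := by
  unfold stratF at h
  rw [Option.map_eq_none_iff] at h
  rw [List.head?_eq_none_iff, Finset.toList_eq_nil] at h
  intro q hq hlt
  have hmem : q ∈ P.all.filter fun q => cnt u ((0:ℕ), q) < target (cnt u ((3:ℕ), q)) :=
    Finset.mem_filter.mpr ⟨hq, hlt⟩
  rw [h] at hmem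
  simp at hmem

lemma env_letter {P : ProcTriple} {σ : Event} (h : isEnvEvent alph4 P σ) :
    σ.1 = 2 ∨ σ.1 = 3 := by
  obtain ⟨h1, h2, -⟩ := h
  have h4 : σ.1 < 4 := h1
  have : ¬ (σ.1 < 2) := by simpa [alph4] using h2
  omega

lemma strat_invariant {P : ProcTriple} {w : Exec}
    (hv : w.valid alph4 P) (hc : compatible alph4 P (stratF P) w) :
    ∀ n q, cnt (w.pre n) ((0:ℕ), q) ≤ target (cnt (w.pre n) ((3:ℕ), q)) := by
  intro n
  induction n with
  | zero => intro q; simp [pre_zero, cnt, target]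
  | succ m ih =>
    intro q
    rw [pre_succ]
    cases hat : w.at? m with
    | none => simpa using ih q
    | some σ =>
      rw [show (some σ).toList = [σ] from rfl, cnt_append, cnt_append]
      rcases valid_at? hv hat with hs | he
      · have hf := hc m σ hat hs
        obtain ⟨h0, hmem, hdef⟩ := stratF_some hf
        have hne3 : σ ≠ ((3:ℕ), q) := by
          intro h; rw [h] at h0; simp at h0
        rw [if_neg hne3, Nat.add_zero]
        by_cases hq : σ = ((0:ℕ), q)
        · rw [if_pos hq]
          have h2 : σ.2 = q := by rw [hq]
          rw [h2] at hdef
          omega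
        · rw [if_neg hq, Nat.add_zero]
          exact ih q
      · have hne0 : σ ≠ ((0:ℕ), q) := by
          intro h
          rcases env_letter he with h' | h' <;> rw [h] at h' <;> simp at h'
        rw [if_neg hne0, Nat.add_zero]
        calc cnt (w.pre m) ((0:ℕ), q) ≤ target (cnt (w.pre m) ((3:ℕ), q)) := ih q
          _ ≤ _ := target_mono (by split_ifs <;> omega)

/-- Prefix counting function for infinite executions. -/
def cg (g : ℕ → Event) (N : ℕ) (v : Event) : ℕ :=
  ((Finset.range N).filter fun i => g i = v).card

lemma cnt_pre_inf {g : ℕ → Event} {N : ℕ} {v : Event} :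
    cnt (Exec.pre (.inf g) N) v = cg g N v := by
  unfold cnt cg
  congr 1
  ext i
  rw [mem_cntset, at?_pre]
  simp only [Exec.at?, Option.some.injEq, Finset.mem_filter, Finset.mem_range]

lemma cg_mono {g : ℕ → Event} {v : Event} {N N' : ℕ} (h : N ≤ N') :
    cg g N v ≤ cg g N' v := by
  rw [← cnt_pre_inf, ← cnt_pre_inf]
  exact cnt_pre_mono h

lemma ge2_inf {g : ℕ → Event} {v : Event} :
    Ge2 (.inf g) v ↔ ∃ N, 2 ≤ cg g N v := by
  rw [ge2_iff_pre]
  exact exists_congr fun N => by rw [cnt_pre_inf]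

lemma ge3_inf {g : ℕ → Event} {v : Event} :
    Ge3 (.inf g) v ↔ ∃ N, 3 ≤ cg g N v := by
  rw [ge3_iff_pre]
  exact exists_congr fun N => by rw [cnt_pre_inf]

lemma cg_of_finset {g : ℕ → Event} {v : Event} {t : Finset ℕ}
    (ht : ∀ i ∈ t, g i = v) : t.card ≤ cg g (t.sup id + 1) v := by
  apply Finset.card_le_card
  intro i hi
  simp only [Finset.mem_filter, Finset.mem_range]
  exact ⟨Nat.lt_succ_of_le (Finset.le_sup (f := id) hi), ht i hi⟩

lemma stratF_winning (P : ProcTriple) (hPe : P.Pe = ∅) :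
    winningStrategy alph4 P phi4 (stratF P) := by
  constructor
  · intro u σ h
    obtain ⟨h0, hmem, -⟩ := stratF_some h
    refine ⟨?_, ?_, ?_⟩
    · rw [h0]; show (0:ℕ) < 4; norm_num
    · rw [h0]; rfl
    · unfold ProcTriple.all at hmem
      rw [hPe] at hmem
      simpa [Finset.mem_union] using hmem
  · intro w hv hcomp hfair
    rw [satS_phi4_iff]
    intro x hx q hq
    have hqall : q ∈ P.all := proc_mem_all hv hx hq
    cases w with
    | fin l =>
      have hnone : stratF P l = none := hfair
      have hge := stratF_none hnone q hqall
      have hle := strat_invariant hv hcomp l.length q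
      rw [pre_fin_full le_rfl] at hle
      have heq : cnt l ((0:ℕ), q) = target (cnt l ((3:ℕ), q)) := by omega
      rw [ex2_fin, ex2_fin, heq]
      exact target_eq_two
    | inf g =>
      have hinv : ∀ N q', cg g N ((0:ℕ), q') ≤ target (cg g N ((3:ℕ), q')) := by
        intro N q'
        have := strat_invariant hv hcomp N q'
        rwa [cnt_pre_inf, cnt_pre_inf] at this
      have hafin : ∀ q', ({i | g i = ((0:ℕ), q')}).Finite := by
        intro q'
        by_contra hinf
        obtain ⟨t, hts, htc⟩ := Set.Infinite.exists_subset_card_eq (show Set.Infinite _ from hinf) 4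
        have h4 := cg_of_finset (g := g) (v := ((0:ℕ), q')) fun i hi => hts hi
        have h1 := hinv (t.sup id + 1) q'
        have h2 := target_le (d := cg g (t.sup id + 1) ((3:ℕ), q'))
        omega
      have hsysfin : ({j | isSysEvent alph4 P (g j)}).Finite := by
        have hsub : {j | isSysEvent alph4 P (g j)} ⊆ ⋃ q' ∈ P.all, {i | g i = ((0:ℕ), q')} := by
          intro j hj
          have hfj := hcomp j (g j) rfl hj
          obtain ⟨h0, hmem, -⟩ := stratF_some hfj
          simp only [Set.mem_iUnion]
          exact ⟨(g j).2, hmem, by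
            show g j = ((0:ℕ), (g j).2)
            exact Prod.ext h0 rfl⟩
        exact Set.Finite.subset
          (Set.Finite.biUnion P.all.finite_toSet fun q' _ => hafin q') hsub
      have hprop_fin : ({i | stratF P (Exec.pre (.inf g) i) ≠ none}).Finite := by
        by_contra hinf
        exact absurd (hfair (show Set.Infinite _ from hinf)) (Set.not_infinite.mpr hsysfin)
      obtain ⟨N0, hN0⟩ : ∃ N0, ∀ i, N0 ≤ i → stratF P (Exec.pre (.inf g) i) = none := by
        obtain ⟨b, hb⟩ := hprop_fin.bddAbove
        refine ⟨b + 1, fun i hi => ?_⟩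
        by_contra hne
        have := hb hne
        omega
      have hstab : ∀ N, N0 ≤ N → cg g N ((0:ℕ), q) = target (cg g N ((3:ℕ), q)) := by
        intro N hN
        have hge := stratF_none (hN0 N hN) q hqall
        rw [cnt_pre_inf, cnt_pre_inf] at hge
        have := hinv N q
        omega
      by_cases hdfin : ({i | g i = ((3:ℕ), q)}).Finite
      · -- finitely many d's on q
        obtain ⟨b, hb⟩ := hdfin.bddAbove
        set N1 := max (b + 1) N0 with hN1
        have hdstab : ∀ N, N1 ≤ N → cg g N ((3:ℕ), q) = cg g N1 ((3:ℕ), q) := by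
          intro N hN
          unfold cg
          congr 1
          ext i
          simp only [Finset.mem_filter, Finset.mem_range]
          constructor
          · rintro ⟨-, h⟩
            have : i ≤ b := hb h
            exact ⟨by omega, h⟩
          · rintro ⟨hi, h⟩
            exact ⟨by omega, h⟩
        set D := cg g N1 ((3:ℕ), q) with hD
        have hastab : ∀ N, N1 ≤ N → cg g N ((0:ℕ), q) = target D := by
          intro N hN
          rw [hstab N (le_trans (le_max_right _ _) hN), hdstab N hN]
        have hGe : ∀ (K : ℕ) (v : Event) (c : ℕ), (∀ N, N1 ≤ N → cg g N v = c) →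
            ((∃ N, K ≤ cg g N v) ↔ K ≤ c) := by
          intro K v c hc
          constructor
          · rintro ⟨N, hN⟩
            calc K ≤ cg g N v := hN
              _ ≤ cg g (max N N1) v := cg_mono (le_max_left _ _)
              _ = c := hc _ (le_max_right _ _)
          · intro h
            exact ⟨N1, by rw [hc N1 le_rfl]; exact h⟩
        rw [Ex2, Ex2, ge2_inf, ge3_inf, ge2_inf, ge3_inf,
          hGe 2 _ _ hastab, hGe 3 _ _ hastab, hGe 2 _ _ hdstab, hGe 3 _ _ hdstab]
        unfold target
        split_ifs <;> constructor <;> rintro ⟨h1, h2⟩ <;> constructor <;> omega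
      · -- infinitely many d's on q
        obtain ⟨t, hts, htc⟩ := Set.Infinite.exists_subset_card_eq (show Set.Infinite _ from hdfin) 3
        have h3 := cg_of_finset (g := g) (v := ((3:ℕ), q)) fun i hi => hts hi
        set N1 := max (t.sup id + 1) N0 with hN1
        have hd3 : 3 ≤ cg g N1 ((3:ℕ), q) := by
          calc 3 ≤ cg g (t.sup id + 1) ((3:ℕ), q) := by omega
            _ ≤ _ := cg_mono (le_max_left _ _)
        have ha3 : 3 ≤ cg g N1 ((0:ℕ), q) := by
          rw [hstab N1 (le_max_right _ _), target_of_ge hd3]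
        have hGe3a : Ge3 (.inf g) ((0:ℕ), q) := ge3_inf.mpr ⟨N1, ha3⟩
        have hGe3d : Ge3 (.inf g) ((3:ℕ), q) := ge3_inf.mpr ⟨N1, hd3⟩
        constructor
        · rintro ⟨-, h⟩; exact absurd hGe3a h
        · rintro ⟨-, h⟩; exact absurd hGe3d h

end Game


/-- Over the alphabet `A_s = {a,b}`, `A_e = {c,d}`, the sentence
`φ_4` satisfies `Win(φ_4) = ℕ × {0} × ℕ`. -/
theorem win_phi4 : WinFO alph4 phi4 = { k : Tok | k.2.1 = 0 } := by
  ext k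
  simp only [Set.mem_setOf_eq, WinFO]
  constructor
  · rintro ⟨P, hPs, hPe, hPse, f, hproper, hwin⟩
    by_contra hne
    obtain ⟨p, hp⟩ : P.Pe.Nonempty := Finset.card_ne_zero.mp (by rw [hPe]; exact hne)
    set g := refSeq f p with hg
    have hg_lt : ∀ n, n < 2 → g n = ((3:ℕ), p) := fun n hn => by
      simp [hg, refSeq, hn]
    have hg_ge : ∀ n, 2 ≤ n → (∃ σ, f (refExt f p n) = some σ ∧ g n = σ) ∨
        (f (refExt f p n) = none ∧ g n = ((2:ℕ), p)) := by
      intro n hn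
      cases hf : f (refExt f p n) with
      | none => exact Or.inr ⟨rfl, by simp [hg, refSeq, Nat.not_lt.mpr hn, hf]⟩
      | some σ => exact Or.inl ⟨σ, rfl, by simp [hg, refSeq, Nat.not_lt.mpr hn, hf]⟩
    have hnotsys : ∀ n, 2 ≤ n → g n ≠ ((3:ℕ), p) ∧ g n ≠ ((0:ℕ), p) := by
      intro n hn
      rcases hg_ge n hn with ⟨σ, hfσ, hgn⟩ | ⟨-, hgn⟩
      · have hs := hproper _ _ hfσ
        constructor
        · intro h
          rw [hgn] at h; rw [h] at hs
          exact absurd hs.2.1 (by simp [alph4])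
        · intro h
          rw [hgn] at h; rw [h] at hs
          rcases hs.2.2 with hmem | hmem
          · exact absurd hp (Finset.disjoint_left.mp P.disj_se hmem)
          · exact absurd hmem (Finset.disjoint_left.mp P.disj_ese hp)
      · rw [hgn]
        constructor <;> simp
    have hvalid : Exec.valid alph4 P (.inf g) := by
      intro n
      rcases Nat.lt_or_ge n 2 with hn | hn
      · rw [hg_lt n hn]
        exact Or.inr ⟨by show (3:ℕ) < 4; norm_num, rfl, Or.inl hp⟩
      · rcases hg_ge n hn with ⟨σ, hfσ, hgn⟩ | ⟨-, hgn⟩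
        · rw [hgn]; exact Or.inl (hproper _ _ hfσ)
        · rw [hgn]; exact Or.inr ⟨by show (2:ℕ) < 4; norm_num, rfl, Or.inl hp⟩
    have hcompat : compatible alph4 P f (.inf g) := by
      intro i σ hat hsys
      have hσ : σ = g i := by simpa [Exec.at?] using hat.symm
      rcases Nat.lt_or_ge i 2 with hi | hi
      · exfalso
        rw [hσ, hg_lt i hi] at hsys
        exact absurd hsys.2.1 (by simp [alph4])
      · rw [show Exec.pre (.inf g) i = refExt f p i from refExt_pre f p i]
        rcases hg_ge i hi with ⟨τ, hfτ, hgn⟩ | ⟨hfn, hgn⟩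
        · rw [hfτ, hσ, hgn]
        · exfalso
          rw [hσ, hgn] at hsys
          exact absurd hsys.2.1 (by simp [alph4])
    have hfair : fair alph4 P f (.inf g) := by
      intro hinf
      have hinf2 : ({i | f (Exec.pre (.inf g) i) ≠ none} \ Set.Iio 2).Infinite :=
        hinf.diff (Set.finite_Iio 2)
      apply hinf2.mono
      rintro i ⟨hiS, hi2⟩
      simp only [Set.mem_Iio, not_lt] at hi2
      rcases hg_ge i hi2 with ⟨σ, hfσ, hgn⟩ | ⟨hfn, -⟩
      · show isSysEvent alph4 P (g i)
        rw [hgn]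
        exact hproper _ _ hfσ
      · refine absurd ?_ hiS
        show f (Exec.pre (.inf g) i) = none
        rw [show Exec.pre (.inf g) i = refExt f p i from refExt_pre f p i]
        exact hfn
    have hsat := hwin (.inf g) hvalid hcompat hfair
    rw [satS_phi4_iff] at hsat
    have hpall : p ∈ P.all := by
      unfold ProcTriple.all
      exact Finset.mem_union_left _ (Finset.mem_union_right _ hp)
    have hiff := hsat (Sum.inl p) hpall p rfl
    have hd : Ex2 (.inf g) ((3:ℕ), p) := by
      constructor
      · exact ⟨0, 1, by omega, by simp [Exec.at?, hg_lt 0 (by omega)],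
          by simp [Exec.at?, hg_lt 1 (by omega)]⟩
      · rintro ⟨i, j, m, h1, h2, h3, hi, hj, hm⟩
        have hcase : 2 ≤ i ∨ 2 ≤ j ∨ 2 ≤ m := by omega
        rcases hcase with h | h | h
        · exact (hnotsys i h).1 (by simpa [Exec.at?] using hi)
        · exact (hnotsys j h).1 (by simpa [Exec.at?] using hj)
        · exact (hnotsys m h).1 (by simpa [Exec.at?] using hm)
    have ha : ¬ Ex2 (.inf g) ((0:ℕ), p) := by
      rintro ⟨⟨i, j, hij, hi, -⟩, -⟩
      have hgi : g i = ((0:ℕ), p) := by simpa [Exec.at?] using hi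
      rcases Nat.lt_or_ge i 2 with h | h
      · rw [hg_lt i h] at hgi
        simp at hgi
      · exact (hnotsys i h).2 hgi
    exact ha (hiff.mpr hd)
  · intro hk
    refine ⟨⟨Finset.range k.1, ∅, (Finset.range k.2.2).image (· + k.1), ?_, ?_, ?_⟩,
      ?_, ?_, ?_, ?_⟩
    · exact Finset.disjoint_empty_right _
    · rw [Finset.disjoint_left]
      intro x hx hx'
      rw [Finset.mem_range] at hx
      rw [Finset.mem_image] at hx'
      obtain ⟨b, hb, rfl⟩ := hx'
      omega
    · exact Finset.disjoint_empty_left _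
    · exact Finset.card_range _
    · simpa using hk.symm
    · rw [Finset.card_image_of_injective _ (add_left_injective k.1), Finset.card_range]
    · exact ⟨stratF _, stratF_winning _ rfl⟩

end PSyn
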